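/- Let K be a compact Hausdorff space and Y a Banach space containing C(K) as a closed subspace. If there exists a weak*-continuous map ρ : K → Y* such that for each t ∈ K, ρ(t) is a norm-preserving extension of the Dirac functional δ_t, then there is a contractive linear projection from Y onto C(K). -/

import Mathlib

open NormedSpace

/-- If `Y` contains `C(K)` as a closed subspace (via the isometric embedding
`j`) and there is a weak*-continuous selection `ρ : K → Y*` of norm-preserving extensions of the
Dirac functionals `δ_t`, then there is a contractive projection from `Y` onto `C(K)`. -/
theorem continuous_extension_implies_contractive_projection
    {K : Type*} [TopologicalSpace K] [CompactSpace K] [T2Space K]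
    {Y : Type*} [NormedAddCommGroup Y] [NormedSpace ℝ Y] [CompleteSpace Y]
    (j : C(K, ℝ) →ₗᵢ[ℝ] Y)
    (ρ : K → StrongDual ℝ Y)
    (hcont : Continuous fun t => StrongDual.toWeakDual (ρ t))
    (hnorm : ∀ t, ‖ρ t‖ = 1)
    (hext : ∀ (t : K) (a : C(K, ℝ)), ρ t (j a) = a t) :
    ∃ P : Y →L[ℝ] C(K, ℝ), ‖P‖ ≤ 1 ∧ ∀ a : C(K, ℝ), P (j a) = a := by
  have hc : ∀ y : Y, Continuous fun t => ρ t y := by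
    intro y
    exact (WeakDual.eval_continuous y).comp hcont
  set L : Y →ₗ[ℝ] C(K, ℝ) :=
    { toFun := fun y => ⟨fun t => ρ t y, hc y⟩
      map_add' := by intro y z; ext t; simp
      map_smul' := by intro c y; ext t; simp }
  have hb : ∀ y : Y, ‖L y‖ ≤ 1 * ‖y‖ := by
    intro y
    rw [one_mul]
    apply ContinuousMap.norm_le _ (norm_nonneg y) |>.mpr
    intro t
    calc ‖ρ t y‖ ≤ ‖ρ t‖ * ‖y‖ := (ρ t).le_opNorm y
    _ = ‖y‖ := by rw [hnorm t, one_mul]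
  refine ⟨LinearMap.mkContinuous L 1 hb, LinearMap.mkContinuous_norm_le L zero_le_one hb, ?_⟩
  intro a
  ext t
  exact hext t a
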